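/- Let f(n) = √(2n) + (1/6)·log n, H(n,k,f) = k + (n-k+1)f(n) + Σ_{i=n-k+1}^{n} f(i), and k*(n) = argmax_{1≤k≤n} H(n,k,f). There is a constant A > 0 such that for all n ≥ 1, √(2n) − A ≤ k*(n) ≤ √(2n) + A. -/

import Mathlib

set_option maxHeartbeats 1000000

open Finset

/-- `f n = √(2n) + (log n)/6`. -/
noncomputable def f (n : ℕ) : ℝ := Real.sqrt (2 * n) + (1 / 6) * Real.log n

/-- `H n k g = k + (n-k+1) g(n) + ∑_{i=n-k+1}^{n} g(i)`. -/
noncomputable def H (g : ℕ → ℝ) (n k : ℕ) : ℝ :=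
  (k : ℝ) + ((n : ℝ) - (k : ℝ) + 1) * g n + ∑ i ∈ Finset.Icc (n - k + 1) n, g i

lemma H_succ (g : ℕ → ℝ) (n k : ℕ) (hk : k < n) :
    H g n (k+1) = H g n k + (1 - g n + g (n-k)) := by
  unfold H
  have h1 : n - (k+1) + 1 = n - k := by omega
  rw [h1, ← Finset.insert_Icc_add_one_left_eq_Icc (by omega : n - k ≤ n),
    Finset.sum_insert (by simp)]
  push_cast
  ring

lemma upper (n k : ℕ) (hn : 1 ≤ n) (hk1 : 1 ≤ k) (hkn : k ≤ n)
    (hmax : ∀ j : ℕ, 1 ≤ j → j ≤ n → H f n j ≤ H f n k) :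
    (k : ℝ) ≤ Real.sqrt (2*n) + 4 := by
  set s := Real.sqrt (2*(n:ℝ)) with hs
  have hs0 : 0 ≤ s := Real.sqrt_nonneg _
  have hs2 : s^2 = 2*n := Real.sq_sqrt (by positivity)
  rcases eq_or_lt_of_le hk1 with h1 | h2
  · have : (k:ℝ) = 1 := by exact_mod_cast h1.symm
    linarith
  · -- 2 ≤ k
    have hle := hmax (k-1) (by omega) (by omega)
    have hsub : k - 1 + 1 = k := by omega
    have hdiff := H_succ f n (k-1) (by omega)
    rw [hsub] at hdiff
    have hD : 0 ≤ 1 - f n + f (n-(k-1)) := by linarith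
    have hm : n - (k-1) = n - k + 1 := by omega
    rw [hm] at hD
    -- f n ≤ 1 + f (n-k+1)
    set m := n - k + 1 with hmdef
    have hm1 : 1 ≤ m := by omega
    have hmn : m ≤ n := by omega
    have hmcast : (m:ℝ) = (n:ℝ) - k + 1 := by push_cast [hmdef]; push_cast [Nat.cast_sub hkn]; ring
    set t := Real.sqrt (2*(m:ℝ)) with ht
    have ht0 : 0 ≤ t := Real.sqrt_nonneg _
    have ht2 : t^2 = 2*m := Real.sq_sqrt (by positivity)
    have hlog : Real.log m ≤ Real.log n := by
      apply Real.log_le_log (by exact_mod_cast hm1) (by exact_mod_cast hmn)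
    unfold f at hD
    rw [← hs, ← ht] at hD
    -- s ≤ 1 + t + (1/6)(log m - log n) ≤ 1 + t
    have hst : s ≤ 1 + t := by linarith
    nlinarith [hmcast, sq_nonneg (s - t)]

lemma lower (n k : ℕ) (hn : 1 ≤ n) (hk1 : 1 ≤ k) (hkn : k ≤ n)
    (hmax : ∀ j : ℕ, 1 ≤ j → j ≤ n → H f n j ≤ H f n k) :
    Real.sqrt (2*n) - 4 ≤ (k : ℝ) := by
  set s := Real.sqrt (2*(n:ℝ)) with hs
  have hs0 : 0 ≤ s := Real.sqrt_nonneg _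
  have hs2 : s^2 = 2*n := Real.sq_sqrt (by positivity)
  by_contra hc
  push_neg at hc
  -- hc : (k:ℝ) < s - 4
  have hk0 : (1:ℝ) ≤ k := by exact_mod_cast hk1
  have hs5 : 5 < s := by linarith
  have hn13 : (13:ℝ) ≤ n := by
    by_contra h
    push_neg at h
    have h' : n < 13 := by exact_mod_cast h
    have : (n:ℝ) ≤ 12 := by exact_mod_cast (by omega : n ≤ 12)
    nlinarith
  have hkltn : k < n := by
    rcases lt_or_eq_of_le hkn with h | h
    · exact h
    · exfalso
      rw [h] at hc
      nlinarith
  set m := n - k with hmdef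
  have hm1 : 1 ≤ m := by omega
  have hmcast : (m:ℝ) = (n:ℝ) - k := by
    rw [hmdef]; push_cast [Nat.cast_sub (le_of_lt hkltn)]; ring
  -- maximality at k+1
  have hle := hmax (k+1) (by omega) (by omega)
  have hdiff := H_succ f n k hkltn
  have hD : 1 - f n + f m ≤ 0 := by rw [hdiff] at hle; linarith
  set t := Real.sqrt (2*(m:ℝ)) with ht
  have ht0 : 0 ≤ t := Real.sqrt_nonneg _
  have ht2 : t^2 = 2*m := Real.sq_sqrt (by positivity)
  have hmpos : (0:ℝ) < m := by exact_mod_cast hm1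
  have hnpos : (0:ℝ) < n := by linarith
  -- k < s and 2k ≤ n
  have hks : (k:ℝ) < s := by linarith
  have h2k : 2*(k:ℝ) ≤ n := by nlinarith
  have hn2m : (n:ℝ) ≤ 2*m := by rw [hmcast]; linarith
  -- log bound
  have hlog : Real.log n - Real.log m ≤ (k:ℝ)/m := by
    have h1 : Real.log ((n:ℝ)/m) ≤ (n:ℝ)/m - 1 :=
      Real.log_le_sub_one_of_pos (by positivity)
    rw [Real.log_div (ne_of_gt hnpos) (ne_of_gt hmpos)] at h1
    have h2 : (n:ℝ)/m - 1 = ((n:ℝ) - m)/m := by field_simp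
    rw [h2] at h1
    have h3 : (n:ℝ) - m = k := by rw [hmcast]; ring
    rw [h3] at h1
    exact h1
  have hkm : (k:ℝ)/m ≤ 2*k/n := by
    rw [div_le_div_iff₀ hmpos hnpos]
    nlinarith
  unfold f at hD
  rw [← hs, ← ht] at hD
  -- hD : 1 - (s + (1/6) log n) + (t + (1/6) log m) ≤ 0
  have hts : t ≤ s - 1 + (k:ℝ)/(3*n) := by
    have : 1 + t ≤ s + (1/6)*(Real.log n - Real.log m) := by linarith
    have h6 : (1/6)*(Real.log n - Real.log m) ≤ (k:ℝ)/(3*n) := by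
      have heq : (k:ℝ)/(3*n) = (1/6)*(2*(k:ℝ)/n) := by field_simp; ring
      rw [heq]
      linarith [hlog.trans hkm]
    linarith
  -- final contradiction
  have hc3 : 3*(n:ℝ)*((k:ℝ)/(3*n)) = k := by field_simp
  set c := (k:ℝ)/(3*n) with hcdef
  have hc0 : 0 ≤ c := by positivity
  have hsc23 : s*c ≤ 2/3 := by
    have hsk : s*(k:ℝ) ≤ 2*n := by nlinarith
    have heq : s*c = s*(k:ℝ)/(3*n) := by rw [hcdef]; ring
    rw [heq, div_le_iff₀ (by positivity)]
    linarith
  clear_value s t m c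
  clear hmax hle hdiff hD
  have hc13 : c ≤ 1/3 := by
    rw [hcdef, div_le_iff₀ (by positivity)]
    have : (k:ℝ) ≤ n := by exact_mod_cast hkn
    linarith
  have hcc : c^2 ≤ (1/3)*c := by nlinarith [mul_le_mul_of_nonneg_left hc13 hc0]
  have ht2' : t^2 = 2*(n:ℝ) - 2*k := by rw [ht2, hmcast]; ring
  have hfac : 0 ≤ (s - 1 + c - t) * (s - 1 + c + t) := by
    apply mul_nonneg <;> linarith
  nlinarith [hfac, hs2, ht2', hsc23, hcc, hc13, hc0, hc]

/-- Any maximizer `k` of `k ↦ H(n,k,f)` over `1 ≤ k ≤ n` satisfies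
`√(2n) - A ≤ k ≤ √(2n) + A`. -/
theorem stmt_10 :
    ∃ A : ℝ, 0 < A ∧ ∀ n : ℕ, 1 ≤ n → ∀ k : ℕ, 1 ≤ k → k ≤ n →
      (∀ j : ℕ, 1 ≤ j → j ≤ n → H f n j ≤ H f n k) →
      Real.sqrt (2 * n) - A ≤ (k : ℝ) ∧ (k : ℝ) ≤ Real.sqrt (2 * n) + A := by
  refine ⟨4, by norm_num, fun n hn k hk1 hkn hmax => ⟨?_, ?_⟩⟩
  · exact lower n k hn hk1 hkn hmax
  · exact upper n k hn hk1 hkn hmax
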